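/- Let λ > 0, 0 < β < 1/2, and let ψ be a real-valued function defined for small ε > 0 with ψ(ε) → 0 as ε → 0⁺ and λ + ψ(ε) > 0. Define N(ε) = ∫₀^{(λ+ψ(ε))/ε^β} du/√((1+u²)(1+ε·u²)) and D(ε) = ∫₀^{+∞} du/√((1+u²)(1+ε·u²)). Then, as ε → 0⁺, D(ε) ~ (1/2)·ln(1/ε) and N(ε) ~ β·ln(1/ε) (i.e., the ratios D(ε)/((1/2)ln(1/ε)) and N(ε)/(β·ln(1/ε)) tend to 1). -/

import Mathlib

open Filter MeasureTheory

open Set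

private lemma aux_cont (ε : ℝ) (hε : 0 ≤ ε) :
    Continuous (fun u : ℝ => 1 / Real.sqrt ((1 + u ^ 2) * (1 + ε * u ^ 2))) := by
  apply Continuous.div continuous_const
  · exact Real.continuous_sqrt.comp (by continuity)
  · intro u
    have : 0 < Real.sqrt ((1 + u ^ 2) * (1 + ε * u ^ 2)) := by positivity
    exact this.ne'

private lemma aux_integrable {ε : ℝ} (hε : 0 < ε) :
    IntegrableOn (fun u : ℝ => 1 / Real.sqrt ((1 + u ^ 2) * (1 + ε * u ^ 2))) (Ioi 0) := by
  set c := min 1 ε with hc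
  have hc0 : 0 < c := lt_min one_pos hε
  have hg : IntegrableOn (fun u : ℝ => (Real.sqrt c)⁻¹ * (1 + u ^ 2)⁻¹) (Ioi 0) :=
    ((integrable_inv_one_add_sq).const_mul _).integrableOn
  refine Integrable.mono' hg ((aux_cont ε hε.le).aestronglyMeasurable.restrict) ?_
  refine Filter.Eventually.of_forall fun u => ?_
  have h1 : 0 < 1 + u ^ 2 := by positivity
  have h2 : c * (1 + u ^ 2) ^ 2 ≤ (1 + u ^ 2) * (1 + ε * u ^ 2) := by
    have hc1 : c ≤ 1 := min_le_left _ _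
    have hc2 : c ≤ ε := min_le_right _ _
    have h5 : c * (1 + u ^ 2) ≤ 1 + ε * u ^ 2 := by nlinarith [sq_nonneg u]
    calc c * (1 + u ^ 2) ^ 2 = (1 + u ^ 2) * (c * (1 + u ^ 2)) := by ring
      _ ≤ (1 + u ^ 2) * (1 + ε * u ^ 2) := by nlinarith
  have h3 : Real.sqrt c * (1 + u ^ 2) ≤ Real.sqrt ((1 + u ^ 2) * (1 + ε * u ^ 2)) := by
    have := Real.sqrt_le_sqrt h2
    rwa [Real.sqrt_mul hc0.le, Real.sqrt_sq h1.le] at this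
  have h4 : 0 < Real.sqrt c * (1 + u ^ 2) := by positivity
  rw [Real.norm_eq_abs, abs_of_nonneg (by positivity)]
  rw [one_div]
  calc (Real.sqrt ((1 + u ^ 2) * (1 + ε * u ^ 2)))⁻¹ ≤ (Real.sqrt c * (1 + u ^ 2))⁻¹ :=
        inv_anti₀ h4 h3
    _ = (Real.sqrt c)⁻¹ * (1 + u ^ 2)⁻¹ := by rw [mul_inv]

private lemma aux_lower_pt {ε u : ℝ} (hε : 0 < ε) (hu : 0 ≤ u) :
    (1 + u)⁻¹ - Real.sqrt ε * (1 + Real.sqrt ε * u)⁻¹ ≤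
      1 / Real.sqrt ((1 + u ^ 2) * (1 + ε * u ^ 2)) := by
  set a := Real.sqrt ε with ha
  have ha0 : 0 < a := Real.sqrt_pos.mpr hε
  have h1 : (0:ℝ) < 1 + u := by linarith
  have h2 : (0:ℝ) < 1 + a * u := by positivity
  have key : Real.sqrt ((1 + u ^ 2) * (1 + ε * u ^ 2)) ≤ (1 + u) * (1 + a * u) := by
    have e1 : Real.sqrt (1 + u ^ 2) ≤ 1 + u := by
      rw [show (1:ℝ) + u = Real.sqrt ((1+u)^2) by rw [Real.sqrt_sq h1.le]]
      exact Real.sqrt_le_sqrt (by nlinarith)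
    have e2 : Real.sqrt (1 + ε * u ^ 2) ≤ 1 + a * u := by
      rw [show (1:ℝ) + a * u = Real.sqrt ((1 + a*u)^2) by rw [Real.sqrt_sq h2.le]]
      refine Real.sqrt_le_sqrt ?_
      have : a ^ 2 = ε := Real.sq_sqrt hε.le
      nlinarith
    calc Real.sqrt ((1 + u ^ 2) * (1 + ε * u ^ 2))
        = Real.sqrt (1 + u ^ 2) * Real.sqrt (1 + ε * u ^ 2) := Real.sqrt_mul (by positivity) _
      _ ≤ (1 + u) * (1 + a * u) := by
          apply mul_le_mul e1 e2 (Real.sqrt_nonneg _) h1.le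
  have hs : 0 < Real.sqrt ((1 + u ^ 2) * (1 + ε * u ^ 2)) := by positivity
  have step1 : (1 + u)⁻¹ - a * (1 + a * u)⁻¹ ≤ ((1 + u) * (1 + a * u))⁻¹ := by
    have heq : (1 + u)⁻¹ - a * (1 + a * u)⁻¹ = (1 - a) * ((1 + u) * (1 + a * u))⁻¹ := by
      field_simp
      ring
    rw [heq]
    nlinarith [inv_pos.mpr (mul_pos h1 h2)]
  refine step1.trans ?_
  rw [one_div]
  exact inv_anti₀ hs key

private lemma aux_ftc {ε T : ℝ} (hε : 0 < ε) (hT : 0 ≤ T) :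
    Real.log (1 + T) - Real.log (1 + Real.sqrt ε * T) ≤
      ∫ u in Ioc (0:ℝ) T, 1 / Real.sqrt ((1 + u ^ 2) * (1 + ε * u ^ 2)) := by
  have ha0 : 0 < Real.sqrt ε := Real.sqrt_pos.mpr hε
  have hderiv : ∀ u ∈ uIcc (0:ℝ) T,
      HasDerivAt (fun u => Real.log (1 + u) - Real.log (1 + Real.sqrt ε * u))
        ((1 + u)⁻¹ - Real.sqrt ε * (1 + Real.sqrt ε * u)⁻¹) u := by
    rw [Set.uIcc_of_le hT]
    intro u hu
    have h1 : (0:ℝ) < 1 + u := by linarith [hu.1]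
    have h2 : (0:ℝ) < 1 + Real.sqrt ε * u := by
      have := hu.1
      positivity
    have d1 : HasDerivAt (fun u : ℝ => Real.log (1 + u)) (1 + u)⁻¹ u := by
      have := ((hasDerivAt_id u).const_add 1).log h1.ne'
      simpa using this
    have d2 : HasDerivAt (fun u : ℝ => Real.log (1 + Real.sqrt ε * u))
        (Real.sqrt ε * (1 + Real.sqrt ε * u)⁻¹) u := by
      have := (((hasDerivAt_id u).const_mul (Real.sqrt ε)).const_add 1).log h2.ne'
      simpa [mul_comm, div_eq_mul_inv] using this
    exact d1.sub d2
  have hint1 : IntervalIntegrable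
      (fun u : ℝ => (1 + u)⁻¹ - Real.sqrt ε * (1 + Real.sqrt ε * u)⁻¹) volume 0 T := by
    apply ContinuousOn.intervalIntegrable
    rw [Set.uIcc_of_le hT]
    apply ContinuousOn.sub
    · apply ContinuousOn.inv₀ (by fun_prop)
      intro u hu
      have h1 : (0:ℝ) < 1 + u := by linarith [hu.1]
      exact h1.ne'
    · apply ContinuousOn.mul continuousOn_const
      apply ContinuousOn.inv₀ (by fun_prop)
      intro u hu
      have hu0 : (0:ℝ) ≤ u := hu.1
      have h2 : (0:ℝ) < 1 + Real.sqrt ε * u := by positivity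
      exact h2.ne'
  have hint2 : IntervalIntegrable
      (fun u : ℝ => 1 / Real.sqrt ((1 + u ^ 2) * (1 + ε * u ^ 2))) volume 0 T :=
    (aux_cont ε hε.le).intervalIntegrable _ _
  have hftc := intervalIntegral.integral_eq_sub_of_hasDerivAt hderiv hint1
  have hmono := intervalIntegral.integral_mono_on hT hint1 hint2
    (fun u hu => aux_lower_pt hε hu.1)
  rw [hftc] at hmono
  simp only [mul_zero, add_zero, Real.log_one, sub_self, sub_zero] at hmono
  rwa [intervalIntegral.integral_of_le hT] at hmono

private lemma aux_upper {ε T : ℝ} (hε : 0 < ε) (hT : 1 ≤ T) :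
    ∫ u in Ioc (0:ℝ) T, 1 / Real.sqrt ((1 + u ^ 2) * (1 + ε * u ^ 2)) ≤
      1 + Real.log T := by
  have hf := aux_integrable hε
  have hsub1 : Ioc (0:ℝ) 1 ⊆ Ioi 0 := Ioc_subset_Ioi_self
  have hsub2 : Ioc (1:ℝ) T ⊆ Ioi 0 := fun u hu => lt_of_lt_of_le one_pos hu.1.le
  have hf1 : IntegrableOn (fun u : ℝ => 1 / Real.sqrt ((1 + u ^ 2) * (1 + ε * u ^ 2)))
      (Ioc 0 1) := hf.mono_set hsub1
  have hf2 : IntegrableOn (fun u : ℝ => 1 / Real.sqrt ((1 + u ^ 2) * (1 + ε * u ^ 2)))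
      (Ioc 1 T) := hf.mono_set hsub2
  have hsplit : Ioc (0:ℝ) T = Ioc 0 1 ∪ Ioc 1 T := (Ioc_union_Ioc_eq_Ioc zero_le_one hT).symm
  rw [hsplit, setIntegral_union (Ioc_disjoint_Ioc_of_le le_rfl) measurableSet_Ioc hf1 hf2]
  have hb1 : ∫ u in Ioc (0:ℝ) 1, 1 / Real.sqrt ((1 + u ^ 2) * (1 + ε * u ^ 2)) ≤ 1 := by
    calc ∫ u in Ioc (0:ℝ) 1, 1 / Real.sqrt ((1 + u ^ 2) * (1 + ε * u ^ 2))
        ≤ ∫ _u in Ioc (0:ℝ) 1, (1:ℝ) := by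
          apply setIntegral_mono_on hf1 (by simp) measurableSet_Ioc
          intro u hu
          rw [div_le_one (by positivity)]
          rw [Real.one_le_sqrt]
          nlinarith [sq_nonneg u, mul_nonneg hε.le (sq_nonneg u)]
      _ = 1 := by simp
  have hb2 : ∫ u in Ioc (1:ℝ) T, 1 / Real.sqrt ((1 + u ^ 2) * (1 + ε * u ^ 2)) ≤
      Real.log T := by
    have hg2 : IntegrableOn (fun u : ℝ => 1 / u) (Ioc 1 T) := by
      apply (ContinuousOn.integrableOn_Icc ?_).mono_set Ioc_subset_Icc_self
      apply ContinuousOn.div continuousOn_const continuousOn_id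
      intro u hu
      exact (lt_of_lt_of_le one_pos hu.1).ne'
    calc ∫ u in Ioc (1:ℝ) T, 1 / Real.sqrt ((1 + u ^ 2) * (1 + ε * u ^ 2))
        ≤ ∫ u in Ioc (1:ℝ) T, 1 / u := by
          apply setIntegral_mono_on hf2 hg2 measurableSet_Ioc
          intro u hu
          have hu1 : (1:ℝ) ≤ u := hu.1.le
          apply div_le_div_of_nonneg_left zero_le_one (by linarith) ?_
          · rw [Real.le_sqrt (by linarith) (by positivity)]
            nlinarith [mul_nonneg hε.le (sq_nonneg u), sq_nonneg u]
      _ = Real.log T := by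
          rw [← intervalIntegral.integral_of_le hT, integral_one_div, div_one]
          rw [Set.uIcc_of_le hT]
          intro h
          exact absurd h.1 (by norm_num)
  linarith

private lemma aux_tail {ε : ℝ} (hε : 0 < ε) :
    ∫ u in Ioi ((Real.sqrt ε)⁻¹), 1 / Real.sqrt ((1 + u ^ 2) * (1 + ε * u ^ 2)) ≤ 1 := by
  have ha0 : 0 < Real.sqrt ε := Real.sqrt_pos.mpr hε
  have hM : 0 < (Real.sqrt ε)⁻¹ := by positivity
  have hf : IntegrableOn (fun u : ℝ => 1 / Real.sqrt ((1 + u ^ 2) * (1 + ε * u ^ 2)))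
      (Ioi ((Real.sqrt ε)⁻¹)) := (aux_integrable hε).mono_set (Ioi_subset_Ioi hM.le)
  have hg : IntegrableOn (fun u : ℝ => (Real.sqrt ε)⁻¹ * u ^ (-2:ℝ))
      (Ioi ((Real.sqrt ε)⁻¹)) :=
    (integrableOn_Ioi_rpow_of_lt (by norm_num) hM).const_mul _
  have hle : ∫ u in Ioi ((Real.sqrt ε)⁻¹), 1 / Real.sqrt ((1 + u ^ 2) * (1 + ε * u ^ 2)) ≤
      ∫ u in Ioi ((Real.sqrt ε)⁻¹), (Real.sqrt ε)⁻¹ * u ^ (-2:ℝ) := by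
    apply setIntegral_mono_on hf hg measurableSet_Ioi
    intro u hu
    have hu0 : 0 < u := lt_trans hM hu
    have hr : u ^ (-2:ℝ) = (u ^ 2)⁻¹ := by
      rw [Real.rpow_neg hu0.le, Real.rpow_two]
    rw [hr, one_div]
    have hkey : Real.sqrt ε * u ^ 2 ≤ Real.sqrt ((1 + u ^ 2) * (1 + ε * u ^ 2)) := by
      rw [show Real.sqrt ε * u ^ 2 = Real.sqrt (ε * (u^2)^2) by
        rw [Real.sqrt_mul hε.le, Real.sqrt_sq (by positivity)]]
      apply Real.sqrt_le_sqrt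
      nlinarith [sq_nonneg u, sq_nonneg (u^2)]
    calc (Real.sqrt ((1 + u ^ 2) * (1 + ε * u ^ 2)))⁻¹
        ≤ (Real.sqrt ε * u ^ 2)⁻¹ := inv_anti₀ (by positivity) hkey
      _ = (Real.sqrt ε)⁻¹ * (u ^ 2)⁻¹ := by rw [mul_inv]
  refine hle.trans ?_
  rw [integral_const_mul, integral_Ioi_rpow_of_lt (by norm_num) hM]
  rw [show (-2:ℝ) + 1 = -1 by norm_num]
  rw [Real.rpow_neg_one, inv_inv]
  field_simp
  exact le_rfl

private lemma D_bounds {ε : ℝ} (h1 : 0 < ε) (h2 : ε < 1) :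
    (1/2) * Real.log (1/ε) - Real.log 2 ≤
      (∫ u in Ioi (0:ℝ), 1 / Real.sqrt ((1 + u ^ 2) * (1 + ε * u ^ 2))) ∧
    (∫ u in Ioi (0:ℝ), 1 / Real.sqrt ((1 + u ^ 2) * (1 + ε * u ^ 2))) ≤
      (1/2) * Real.log (1/ε) + 2 := by
  have ha0 : 0 < Real.sqrt ε := Real.sqrt_pos.mpr h1
  have ha1 : Real.sqrt ε ≤ 1 := by
    rw [show (1:ℝ) = Real.sqrt 1 by simp]
    exact Real.sqrt_le_sqrt h2.le
  have hM1 : 1 ≤ (Real.sqrt ε)⁻¹ := (one_le_inv₀ ha0).mpr ha1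
  have hM0 : (0:ℝ) < (Real.sqrt ε)⁻¹ := by positivity
  have hlogM : Real.log ((Real.sqrt ε)⁻¹) = (1/2) * Real.log (1/ε) := by
    rw [Real.log_inv, Real.log_sqrt h1.le, show (1:ℝ)/ε = ε⁻¹ from one_div ε, Real.log_inv]
    ring
  have hf := aux_integrable h1
  constructor
  · -- lower bound
    have hge : (∫ u in Ioc (0:ℝ) ((Real.sqrt ε)⁻¹),
          1 / Real.sqrt ((1 + u ^ 2) * (1 + ε * u ^ 2))) ≤
        ∫ u in Ioi (0:ℝ), 1 / Real.sqrt ((1 + u ^ 2) * (1 + ε * u ^ 2)) := by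
      apply setIntegral_mono_set hf
      · exact Filter.Eventually.of_forall fun u => by positivity
      · exact (Ioc_subset_Ioi_self).eventuallyLE
    have hftc := aux_ftc h1 hM0.le
    rw [mul_inv_cancel₀ ha0.ne'] at hftc
    have hlog : Real.log ((Real.sqrt ε)⁻¹) ≤ Real.log (1 + (Real.sqrt ε)⁻¹) :=
      Real.log_le_log hM0 (by linarith)
    rw [show (1:ℝ) + 1 = 2 by norm_num] at hftc
    linarith [hftc.trans hge]
  · -- upper bound
    have hsplit : Ioi (0:ℝ) = Ioc 0 ((Real.sqrt ε)⁻¹) ∪ Ioi ((Real.sqrt ε)⁻¹) :=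
      (Ioc_union_Ioi_eq_Ioi hM0.le).symm
    rw [hsplit, setIntegral_union Ioc_disjoint_Ioi_same measurableSet_Ioi
      (hf.mono_set Ioc_subset_Ioi_self) (hf.mono_set (Ioi_subset_Ioi hM0.le))]
    have h3 := aux_upper h1 hM1
    have h4 := aux_tail h1
    rw [hlogM] at h3
    linarith

private lemma N_bounds {ε b : ℝ} (h1 : 0 < ε) (hb : 1 ≤ b)
    (hab : Real.sqrt ε * b ≤ 1) :
    Real.log b - Real.log 2 ≤
      (∫ u in Ioo (0:ℝ) b, 1 / Real.sqrt ((1 + u ^ 2) * (1 + ε * u ^ 2))) ∧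
    (∫ u in Ioo (0:ℝ) b, 1 / Real.sqrt ((1 + u ^ 2) * (1 + ε * u ^ 2))) ≤
      1 + Real.log b := by
  have hb0 : (0:ℝ) < b := by linarith
  rw [← integral_Ioc_eq_integral_Ioo]
  constructor
  · have hftc := aux_ftc h1 hb0.le
    have hl1 : Real.log b ≤ Real.log (1 + b) := Real.log_le_log hb0 (by linarith)
    have hl2 : Real.log (1 + Real.sqrt ε * b) ≤ Real.log 2 := by
      apply Real.log_le_log (by positivity)
      linarith
    linarith
  · exact aux_upper h1 hb

private lemma aux_ratio {l : Filter ℝ} {L F : ℝ → ℝ} {c c₁ c₂ : ℝ} (hc : 0 < c)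
    (hL : Tendsto L l atTop)
    (hlow : ∀ᶠ x in l, c * L x + c₁ ≤ F x)
    (hupp : ∀ᶠ x in l, F x ≤ c * L x + c₂) :
    Tendsto (fun x => F x / (c * L x)) l (nhds 1) := by
  have hcL : Tendsto (fun x => c * L x) l atTop := hL.const_mul_atTop hc
  have h0 : ∀ᶠ x in l, 0 < c * L x := hcL.eventually_gt_atTop 0
  have t1 : Tendsto (fun x => 1 + c₁ / (c * L x)) l (nhds 1) := by
    have := tendsto_const_nhds (x := (1:ℝ)) (f := l) |>.add
      (Tendsto.div_atTop (tendsto_const_nhds (x := c₁)) hcL)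
    simpa using this
  have t2 : Tendsto (fun x => 1 + c₂ / (c * L x)) l (nhds 1) := by
    have := tendsto_const_nhds (x := (1:ℝ)) (f := l) |>.add
      (Tendsto.div_atTop (tendsto_const_nhds (x := c₂)) hcL)
    simpa using this
  apply tendsto_of_tendsto_of_tendsto_of_le_of_le' t1 t2
  · filter_upwards [hlow, h0] with x hx h0x
    rw [show (1:ℝ) + c₁ / (c * L x) = (c * L x + c₁) / (c * L x) by
      rw [add_div, div_self h0x.ne']]
    exact div_le_div_of_nonneg_right hx h0x.le |>.trans_eq rfl
  · filter_upwards [hupp, h0] with x hx h0x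
    rw [show (1:ℝ) + c₂ / (c * L x) = (c * L x + c₂) / (c * L x) by
      rw [add_div, div_self h0x.ne']]
    exact div_le_div_of_nonneg_right hx h0x.le |>.trans_eq rfl

private lemma aux_logL : Tendsto (fun ε : ℝ => Real.log (1/ε))
    (nhdsWithin 0 (Set.Ioi 0)) atTop := by
  have h : Tendsto (fun ε : ℝ => -Real.log ε) (nhdsWithin 0 (Set.Ioi 0)) atTop :=
    tendsto_neg_atBot_atTop.comp Real.tendsto_log_nhdsGT_zero
  refine h.congr fun ε => ?_
  rw [one_div, Real.log_inv]

private lemma aux_rpow_to_zero {γ : ℝ} (hγ : 0 < γ) :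
    Tendsto (fun ε : ℝ => ε ^ γ) (nhdsWithin 0 (Set.Ioi 0)) (nhds 0) := by
  have h : Tendsto (fun ε : ℝ => ε ^ γ) (nhds 0) (nhds ((0:ℝ) ^ γ)) :=
    (Real.continuousAt_rpow_const 0 γ (Or.inr hγ.le)).tendsto
  rw [Real.zero_rpow hγ.ne'] at h
  exact h.mono_left nhdsWithin_le_nhds

/-- With `N(ε) = ∫₀^{(λ+ψ(ε))/ε^β} du/√((1+u²)(1+εu²))` and
`D(ε) = ∫₀^∞ du/√((1+u²)(1+εu²))`, one has `D(ε) ~ (1/2)ln(1/ε)` and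
`N(ε) ~ β·ln(1/ε)` as `ε → 0⁺`. -/
theorem stmt_9 (lam β : ℝ) (hlam : 0 < lam) (hβ : 0 < β) (hβ' : β < 1 / 2)
    (ψ : ℝ → ℝ)
    (hψ : Tendsto ψ (nhdsWithin 0 (Set.Ioi 0)) (nhds 0))
    (hpos : ∀ᶠ ε in nhdsWithin (0 : ℝ) (Set.Ioi 0), 0 < lam + ψ ε) :
    Tendsto
      (fun ε : ℝ =>
        (∫ u in Set.Ioi (0 : ℝ), 1 / Real.sqrt ((1 + u ^ 2) * (1 + ε * u ^ 2))) /
          ((1 / 2) * Real.log (1 / ε)))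
      (nhdsWithin 0 (Set.Ioi 0)) (nhds 1) ∧
    Tendsto
      (fun ε : ℝ =>
        (∫ u in Set.Ioo (0 : ℝ) ((lam + ψ ε) / ε ^ β),
            1 / Real.sqrt ((1 + u ^ 2) * (1 + ε * u ^ 2))) /
          (β * Real.log (1 / ε)))
      (nhdsWithin 0 (Set.Ioi 0)) (nhds 1) := by
  set l := nhdsWithin (0:ℝ) (Set.Ioi 0) with hl
  have hIoo : Set.Ioo (0:ℝ) 1 ∈ l := Ioo_mem_nhdsGT_of_mem ⟨le_refl 0, one_pos⟩
  -- eventual: |ψ ε| < lam / 2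
  have hψ2 : ∀ᶠ ε in l, |ψ ε| < lam / 2 := by
    have := Metric.tendsto_nhds.mp hψ (lam/2) (by positivity)
    simpa [Real.dist_eq] using this
  -- b tends to atTop
  have hrpow_pos : ∀ᶠ ε in l, (0:ℝ) < ε ^ β := by
    filter_upwards [self_mem_nhdsWithin] with ε (hε : ε ∈ Set.Ioi 0)
    exact Real.rpow_pos_of_pos hε β
  have hrpow : Tendsto (fun ε : ℝ => ε ^ β) l (nhdsWithin 0 (Set.Ioi 0)) := by
    rw [tendsto_nhdsWithin_iff]
    exact ⟨aux_rpow_to_zero hβ, hrpow_pos⟩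
  have hinv : Tendsto (fun ε : ℝ => (ε ^ β)⁻¹) l atTop :=
    tendsto_inv_nhdsGT_zero.comp hrpow
  have hlamψ : Tendsto (fun ε : ℝ => lam + ψ ε) l (nhds lam) := by
    simpa using (tendsto_const_nhds (x := lam) (f := l)).add hψ
  have hbT : Tendsto (fun ε : ℝ => (lam + ψ ε) / ε ^ β) l atTop := by
    have := hlamψ.pos_mul_atTop hlam hinv
    refine this.congr fun ε => ?_
    rw [div_eq_mul_inv]
  have hb1 : ∀ᶠ ε in l, 1 ≤ (lam + ψ ε) / ε ^ β := hbT.eventually_ge_atTop 1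
  -- sqrt ε * b ≤ 1 eventually
  have habT : Tendsto (fun ε : ℝ => Real.sqrt ε * ((lam + ψ ε) / ε ^ β)) l (nhds 0) := by
    have hcong : ∀ᶠ ε in l, (lam + ψ ε) * ε ^ ((1:ℝ)/2 - β) =
        Real.sqrt ε * ((lam + ψ ε) / ε ^ β) := by
      filter_upwards [self_mem_nhdsWithin] with ε (hε : ε ∈ Set.Ioi 0)
      rw [Real.sqrt_eq_rpow, Real.rpow_sub hε]
      ring
    have h2 : Tendsto (fun ε : ℝ => (lam + ψ ε) * ε ^ ((1:ℝ)/2 - β)) l (nhds (lam * 0)) :=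
      hlamψ.mul (aux_rpow_to_zero (by linarith))
    rw [mul_zero] at h2
    exact h2.congr' hcong
  have hab1 : ∀ᶠ ε in l, Real.sqrt ε * ((lam + ψ ε) / ε ^ β) ≤ 1 :=
    (habT.eventually_lt_const one_pos).mono fun ε h => h.le
  constructor
  · apply aux_ratio (c₁ := -Real.log 2) (c₂ := 2) one_half_pos aux_logL
    · filter_upwards [hIoo] with ε hε
      have := (D_bounds hε.1 hε.2).1
      linarith
    · filter_upwards [hIoo] with ε hε
      have := (D_bounds hε.1 hε.2).2
      linarith
  · apply aux_ratio (c₁ := Real.log (lam/2) - Real.log 2)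
      (c₂ := 1 + Real.log (2*lam)) hβ aux_logL
    · filter_upwards [hIoo, hψ2, hb1, hab1] with ε hε hψε hbε habε
      have h1 := hε.1
      have habs := abs_lt.mp hψε
      have hlp : 0 < lam + ψ ε := by linarith
      have hN := (N_bounds h1 hbε habε).1
      have hlogb : Real.log ((lam + ψ ε) / ε ^ β) =
          Real.log (lam + ψ ε) + β * Real.log (1/ε) := by
        rw [Real.log_div hlp.ne' (Real.rpow_pos_of_pos h1 β).ne',
          Real.log_rpow h1, one_div, Real.log_inv]
        ring
      rw [hlogb] at hN
      have hmono : Real.log (lam/2) ≤ Real.log (lam + ψ ε) :=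
        Real.log_le_log (by positivity) (by linarith)
      linarith
    · filter_upwards [hIoo, hψ2, hb1, hab1] with ε hε hψε hbε habε
      have h1 := hε.1
      have habs := abs_lt.mp hψε
      have hlp : 0 < lam + ψ ε := by linarith
      have hN := (N_bounds h1 hbε habε).2
      have hlogb : Real.log ((lam + ψ ε) / ε ^ β) =
          Real.log (lam + ψ ε) + β * Real.log (1/ε) := by
        rw [Real.log_div hlp.ne' (Real.rpow_pos_of_pos h1 β).ne',
          Real.log_rpow h1, one_div, Real.log_inv]
        ring
      rw [hlogb] at hN
      have hmono : Real.log (lam + ψ ε) ≤ Real.log (2*lam) :=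
        Real.log_le_log hlp (by linarith)
      linarith
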